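/- Let E be an extremally disconnected compact Hausdorff space admitting a continuous irreducible surjection onto the Cantor space. Then there is no continuous surjection f : ℕ* → E such that every fiber f⁻¹(e) has at most 2 points. -/

import Mathlib

open Set Function Topology

noncomputable section

/-- The Čech–Stone remainder `ℕ* = βℕ ∖ ℕ` of the discrete space of natural numbers. -/
def NStar : Set (StoneCech ℕ) := {p | p ∉ Set.range (stoneCechUnit : ℕ → StoneCech ℕ)}

namespace Stmt14

/-- The extension of the boolean indicator of `A ⊆ ℕ` to `βℕ`. -/
def eb (A : Set ℕ) : StoneCech ℕ → Bool :=
  stoneCechExtend (continuous_of_discreteTopology (f := A.boolIndicator))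

lemma continuous_eb (A : Set ℕ) : Continuous (eb A) :=
  continuous_stoneCechExtend _

lemma eb_unit (A : Set ℕ) (n : ℕ) : eb A (stoneCechUnit n) = A.boolIndicator n :=
  congrFun (stoneCechExtend_extends (continuous_of_discreteTopology (f := A.boolIndicator))) n

lemma eb_unit_mem {A : Set ℕ} {n : ℕ} (h : n ∈ A) : eb A (stoneCechUnit n) = true := by
  rw [eb_unit]; exact (A.mem_iff_boolIndicator n).mp h

lemma eb_unit_not_mem {A : Set ℕ} {n : ℕ} (h : n ∉ A) : eb A (stoneCechUnit n) = false := by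
  rw [eb_unit]; exact (A.notMem_iff_boolIndicator n).mp h

lemma isOpen_unit_singleton (n : ℕ) : IsOpen ({stoneCechUnit n} : Set (StoneCech ℕ)) := by
  have hopen : IsOpen (eb {n} ⁻¹' {true}) :=
    (isOpen_discrete _).preimage (continuous_eb _)
  have heq : eb {n} ⁻¹' {true} = {stoneCechUnit n} := by
    apply Subset.antisymm
    · intro x hx
      have hsub : eb {n} ⁻¹' {true} ⊆ closure ((eb {n} ⁻¹' {true}) ∩ range stoneCechUnit) := by
        intro y hy
        rw [mem_closure_iff]
        intro O hO hyO
        obtain ⟨z, hz⟩ := denseRange_stoneCechUnit.inter_open_nonempty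
          (O ∩ eb {n} ⁻¹' {true}) (hO.inter hopen) ⟨y, hyO, hy⟩
        exact ⟨z, hz.1.1, hz.1.2, hz.2⟩
      have h2 : (eb {n} ⁻¹' {true}) ∩ range stoneCechUnit ⊆ {stoneCechUnit n} := by
        rintro y ⟨hy1, m, rfl⟩
        have : m ∈ ({n} : Set ℕ) := by
          by_contra hm
          rw [mem_preimage, eb_unit_not_mem hm] at hy1
          simp at hy1
        simp_all
      have h3 : closure ((eb {n} ⁻¹' {true}) ∩ range stoneCechUnit) ⊆ {stoneCechUnit n} :=
        (closure_mono h2).trans (closure_singleton (x := stoneCechUnit n)).subset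
      exact h3 (hsub hx)
    · rintro x rfl
      exact mem_preimage.mpr (by rw [eb_unit_mem (mem_singleton n)]; rfl)
  rw [← heq]; exact hopen

end Stmt14

namespace Stmt14B
open Stmt14

lemma unit_injective : Injective (stoneCechUnit : ℕ → StoneCech ℕ) := by
  intro m n h
  by_contra hmn
  have h1 : eb {n} (stoneCechUnit m) = ({n} : Set ℕ).boolIndicator m := eb_unit _ m
  have h2 : eb {n} (stoneCechUnit n) = ({n} : Set ℕ).boolIndicator n := eb_unit _ n
  rw [h] at h1
  rw [h1] at h2
  have h3 := (Set.mem_iff_boolIndicator ({n} : Set ℕ) n).mp rfl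
  rw [← h2] at h3
  exact hmn ((Set.mem_iff_boolIndicator ({n} : Set ℕ) m).mpr h3)

lemma isClosed_NStar : IsClosed NStar := by
  have : NStar = (Set.range (stoneCechUnit : ℕ → StoneCech ℕ))ᶜ := rfl
  rw [this]
  apply IsOpen.isClosed_compl
  have : Set.range (stoneCechUnit : ℕ → StoneCech ℕ) = ⋃ n, {stoneCechUnit n} := by
    ext x; simp [eq_comm]
  rw [this]
  exact isOpen_iUnion fun n => isOpen_unit_singleton n

instance : CompactSpace ↥NStar := isCompact_iff_compactSpace.mp isClosed_NStar.isCompact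

/-- The covering of `βℕ` by closures of complementary parts of `ℕ`. -/
lemma cover_closure (A : Set ℕ) (x : StoneCech ℕ) :
    x ∈ closure (stoneCechUnit '' A) ∪ closure (stoneCechUnit '' Aᶜ) := by
  have h1 : range (stoneCechUnit : ℕ → StoneCech ℕ)
      = stoneCechUnit '' A ∪ stoneCechUnit '' Aᶜ := by
    rw [← image_union, union_compl_self, image_univ]
  have h2 : (univ : Set (StoneCech ℕ)) ⊆
      closure (stoneCechUnit '' A) ∪ closure (stoneCechUnit '' Aᶜ) := by
    calc univ = closure (range (stoneCechUnit : ℕ → StoneCech ℕ)) :=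
          (denseRange_stoneCechUnit.closure_range).symm
      _ ⊆ _ := by rw [h1, closure_union]
  exact h2 (mem_univ x)

/-- If `B ⊆ ℕ` is infinite, its closure in `βℕ` meets `ℕ*`. -/
lemma exists_NStar_mem_closure {B : Set ℕ} (hB : B.Infinite) :
    ∃ q, q ∈ NStar ∧ q ∈ closure (stoneCechUnit '' B) := by
  by_contra h
  push_neg at h
  have hsub : closure (stoneCechUnit '' B) ⊆ range (stoneCechUnit : ℕ → StoneCech ℕ) := by
    intro q hq
    by_contra hq'
    exact h q hq' hq
  have hcomp : IsCompact (closure (stoneCechUnit '' B)) := isClosed_closure.isCompact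
  have hcov : closure (stoneCechUnit '' B) ⊆ ⋃ n, ({stoneCechUnit n} : Set (StoneCech ℕ)) := by
    intro q hq
    obtain ⟨n, rfl⟩ := hsub hq
    exact mem_iUnion.mpr ⟨n, rfl⟩
  obtain ⟨t, ht⟩ := hcomp.elim_finite_subcover _ (fun n => isOpen_unit_singleton n) hcov
  have hBsub : B ⊆ (t : Set ℕ) := by
    intro b hb
    have : stoneCechUnit b ∈ ⋃ n ∈ t, ({stoneCechUnit n} : Set (StoneCech ℕ)) :=
      ht (subset_closure (mem_image_of_mem _ hb))
    simp only [mem_iUnion, mem_singleton_iff] at this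
    obtain ⟨n, hn, heq⟩ := this
    rwa [unit_injective heq]
  exact hB (t.finite_toSet.subset hBsub)

/-- A point of `NStar` in the closure of `stoneCechUnit '' A` forces `A` infinite. -/
lemma infinite_of_NStar_mem_closure {A : Set ℕ} {q : StoneCech ℕ} (hq : q ∈ NStar)
    (hq' : q ∈ closure (stoneCechUnit '' A)) : A.Infinite := by
  intro hfin
  have h1 : (stoneCechUnit '' A).Finite := hfin.image _
  have h2 : closure (stoneCechUnit '' A) = stoneCechUnit '' A := h1.isClosed.closure_eq
  rw [h2] at hq'
  obtain ⟨n, _, rfl⟩ := hq'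
  exact hq (mem_range_self n)

/-- Urysohn step: inside any open `G ∋ q` of `βℕ` there is a set of the form
`closure (stoneCechUnit '' A)` containing `q`. -/
lemma exists_closure_subset {G : Set (StoneCech ℕ)} (hG : IsOpen G) {q : StoneCech ℕ}
    (hq : q ∈ G) : ∃ A : Set ℕ, q ∈ closure (stoneCechUnit '' A) ∧
      closure (stoneCechUnit '' A) ⊆ G := by
  obtain ⟨φ, hφ0, hφ1, hφmem⟩ := exists_continuous_zero_one_of_isClosed
    (isClosed_singleton (x := q)) hG.isClosed_compl
    (by simp [disjoint_left, hq])
  refine ⟨{n | φ (stoneCechUnit n) ≤ 1/2}, ?_, ?_⟩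
  · rcases cover_closure {n | φ (stoneCechUnit n) ≤ 1/2} q with h | h
    · exact h
    · exfalso
      have hclosed : IsClosed {x : StoneCech ℕ | 1/2 ≤ φ x} :=
        isClosed_le continuous_const φ.continuous
      have hsub : stoneCechUnit '' {n | φ (stoneCechUnit n) ≤ 1/2}ᶜ
          ⊆ {x : StoneCech ℕ | 1/2 ≤ φ x} := by
        rintro x ⟨n, hn, rfl⟩
        have hn' : ¬ φ (stoneCechUnit n) ≤ 1/2 := hn
        exact le_of_lt (not_le.mp hn')
      have hmem : q ∈ {x : StoneCech ℕ | 1/2 ≤ φ x} := (closure_minimal hsub hclosed) h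
      have hq0 : φ q = 0 := hφ0 rfl
      have : (1:ℝ)/2 ≤ 0 := hq0 ▸ hmem
      norm_num at this
  · have hclosed : IsClosed {x : StoneCech ℕ | φ x ≤ 1/2} :=
      isClosed_le φ.continuous continuous_const
    have hsub : stoneCechUnit '' {n | φ (stoneCechUnit n) ≤ 1/2}
        ⊆ {x : StoneCech ℕ | φ x ≤ 1/2} := by
      rintro x ⟨n, hn, rfl⟩; exact hn
    intro x hx
    have hx' : φ x ≤ 1/2 := (closure_minimal hsub hclosed) hx
    by_contra hxG
    have h1 : φ x = 1 := hφ1 hxG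
    rw [h1] at hx'
    norm_num at hx'

end Stmt14B

namespace Stmt14C

/-- Splitting a countable family of infinite subsets of `ℕ`. -/
lemma exists_splitting (A : ℕ → Set ℕ) (hA : ∀ n, (A n).Infinite) :
    ∃ Y : Set ℕ, ∀ n, (A n ∩ Y).Infinite ∧ (A n \ Y).Infinite := by
  choose F hF1 hF2 using fun (n b : ℕ) => (hA n).exists_gt b
  let pp : ℕ → ℕ → ℕ × ℕ := fun m b => (F m.unpair.1 b, F m.unpair.1 (F m.unpair.1 b))
  let G : ℕ → ℕ × ℕ := fun m => Nat.rec (pp 0 0) (fun k ih => pp (k+1) ih.2) m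
  have hGsucc : ∀ m, G (m+1) = pp (m+1) (G m).2 := fun m => rfl
  have hpp1 : ∀ m b, (pp m b).1 ∈ A m.unpair.1 := fun m b => hF1 _ _
  have hpp2 : ∀ m b, (pp m b).2 ∈ A m.unpair.1 := fun m b => hF1 _ _
  have hpplt : ∀ m b, (pp m b).1 < (pp m b).2 := fun m b => hF2 _ _
  have hppgt : ∀ m b, b < (pp m b).1 := fun m b => hF2 _ _
  have hG1 : ∀ m, (G m).1 ∈ A m.unpair.1 := by
    intro m; cases m with
    | zero => exact hpp1 0 0
    | succ k => rw [hGsucc]; exact hpp1 _ _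
  have hG2 : ∀ m, (G m).2 ∈ A m.unpair.1 := by
    intro m; cases m with
    | zero => exact hpp2 0 0
    | succ k => rw [hGsucc]; exact hpp2 _ _
  have hGlt : ∀ m, (G m).1 < (G m).2 := by
    intro m; cases m with
    | zero => exact hpplt 0 0
    | succ k => rw [hGsucc]; exact hpplt _ _
  have hstep : ∀ m, (G m).2 < (G (m+1)).1 := by
    intro m; rw [hGsucc]; exact hppgt _ _
  have hchain : ∀ j m, j < m → (G j).2 < (G m).1 := by
    intro j m hjm
    induction m with
    | zero => omega
    | succ k ih =>
      rcases Nat.lt_succ_iff_lt_or_eq.mp hjm with h | h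
      · exact lt_trans (ih h) (lt_trans (hGlt k) (hstep k))
      · subst h; exact hstep j
  have mono1 : StrictMono (fun m => (G m).1) := by
    intro a b hab
    exact lt_trans (hGlt a) (hchain a b hab)
  have mono2 : StrictMono (fun m => (G m).2) := by
    intro a b hab
    exact lt_trans (hchain a b hab) (hGlt b)
  have hpairinj : ∀ n, Injective (fun k => Nat.pair n k) := by
    intro n k k' h
    have := congrArg (fun x => x.unpair.2) h
    simpa [Nat.unpair_pair] using this
  refine ⟨range fun m => (G m).1, fun n => ⟨?_, ?_⟩⟩
  · apply Set.infinite_of_injective_forall_mem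
      (f := fun k : ℕ => (G (Nat.pair n k)).1)
    · exact mono1.injective.comp (hpairinj n)
    · intro k
      constructor
      · have := hG1 (Nat.pair n k)
        simpa [Nat.unpair_pair] using this
      · exact ⟨Nat.pair n k, rfl⟩
  · apply Set.infinite_of_injective_forall_mem
      (f := fun k : ℕ => (G (Nat.pair n k)).2)
    · exact mono2.injective.comp (hpairinj n)
    · intro k
      constructor
      · have := hG2 (Nat.pair n k)
        simpa [Nat.unpair_pair] using this
      · rintro ⟨j, hj⟩
        simp only at hj
        set m := Nat.pair n k with hm
        rcases lt_trichotomy j m with h | h | h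
        · have h1 : (G j).1 < (G j).2 := hGlt j
          have h2 : (G j).2 < (G m).1 := hchain j m h
          have h3 : (G m).1 < (G m).2 := hGlt m
          omega
        · rw [h] at hj
          have := hGlt m
          omega
        · have h2 : (G m).2 < (G j).1 := hchain m j h
          omega

end Stmt14C

/-- If `E` is an extremally disconnected compact Hausdorff space admitting a continuous
irreducible surjection onto the Cantor space, then there is no continuous surjection from
`ℕ*` onto `E` all of whose fibers have at most 2 points. -/
theorem statement14 {E : Type*} [TopologicalSpace E] [CompactSpace E] [T2Space E]
    [ExtremallyDisconnected E]
    (hE : ∃ g : E → (ℕ → Bool), Continuous g ∧ Function.Surjective g ∧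
      ∀ A : Set E, IsClosed A → g '' A = Set.univ → A = Set.univ) :
    ¬ ∃ f : ↥NStar → E, Continuous f ∧ Function.Surjective f ∧
        ∀ e : E, (f ⁻¹' {e}).encard ≤ 2 := by
  classical
  rintro ⟨f, hfc, hfs, hfib⟩
  obtain ⟨g, hgc, hgs, hirr⟩ := hE
  haveI hEne : Nonempty E := ⟨(hgs (fun _ => false)).choose⟩
  -- A countable π-base for `E`, obtained from a countable basis of the Cantor space
  -- via the irreducible surjection `g`.
  obtain ⟨b, hbc, hbne0, hbasis⟩ := TopologicalSpace.exists_countable_basis (ℕ → Bool)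
  have hbneS : b.Nonempty := by
    obtain ⟨C, hC, _, _⟩ :=
      hbasis.exists_subset_of_mem_open (mem_univ (fun _ => false)) isOpen_univ
    exact ⟨C, hC⟩
  obtain ⟨Fb, hFb⟩ := hbc.exists_eq_range hbneS
  set Q : ℕ → Set E := fun n => if (Fb n).Nonempty then g ⁻¹' (Fb n) else univ with hQ
  have hQopen : ∀ n, IsOpen (Q n) := by
    intro n; rw [hQ]; dsimp only
    split
    · exact (hbasis.isOpen (by rw [hFb]; exact mem_range_self n)).preimage hgc
    · exact isOpen_univ
  have hQne : ∀ n, (Q n).Nonempty := by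
    intro n; rw [hQ]; dsimp only
    split
    · rename_i h
      obtain ⟨y, hy⟩ := h; obtain ⟨x, hx⟩ := hgs y
      exact ⟨x, by rw [mem_preimage, hx]; exact hy⟩
    · exact univ_nonempty
  have hQpi : ∀ U : Set E, IsOpen U → U.Nonempty → ∃ n, Q n ⊆ U := by
    intro U hU hUne
    have hclosed : IsClosed (g '' Uᶜ) := hgc.isClosedMap _ hU.isClosed_compl
    have hne : g '' Uᶜ ≠ univ := by
      intro h
      have hcompl : Uᶜ = univ := hirr Uᶜ hU.isClosed_compl h
      obtain ⟨x, hx⟩ := hUne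
      have : x ∈ Uᶜ := hcompl ▸ mem_univ x
      exact this hx
    obtain ⟨y, hy⟩ := Set.nonempty_compl.mpr hne
    obtain ⟨C, hCb, hyC, hCO⟩ := hbasis.exists_subset_of_mem_open hy hclosed.isOpen_compl
    have hCne : C.Nonempty := ⟨y, hyC⟩
    obtain ⟨n, hn⟩ : ∃ n, Fb n = C := by
      have : C ∈ range Fb := hFb ▸ hCb
      obtain ⟨n, hn⟩ := this; exact ⟨n, hn⟩
    refine ⟨n, ?_⟩
    rw [hQ]; dsimp only; rw [hn, if_pos hCne]
    intro x hx
    by_contra hxU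
    exact (hCO (hx : g x ∈ C)) (mem_image_of_mem _ hxU)
  -- Gleason: `E` is projective, giving a continuous section `s` of `f`.
  have hproj : CompactT2.Projective E := CompactT2.ExtremallyDisconnected.projective
  obtain ⟨h₀, hh₀c, hh₀⟩ := hproj (Y := ULift ↥NStar) (Z := E) (f := (id : E → E))
    (g := f ∘ (ULift.down : ULift ↥NStar → ↥NStar))
    continuous_id (hfc.comp continuous_uliftDown)
    (hfs.comp ULift.down_surjective)
  set s : E → ↥NStar := fun e => (h₀ e).down with hs
  have hsc : Continuous s := continuous_uliftDown.comp hh₀c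
  have hsec : ∀ e, f (s e) = e := fun e => congrFun hh₀ e
  set e₀ : E := Classical.arbitrary E with he₀
  set p : ↥NStar := s e₀ with hpdef
  have hp : f p = e₀ := hsec e₀
  set T : Set ↥NStar := f ⁻¹' {e₀} \ {p} with hT
  -- At most one extra point in the fiber over `e₀`.
  have hTsub : T.Subsingleton := by
    intro a ha c hc
    by_contra hac
    have hap : a ≠ p := ha.2
    have hcp : c ≠ p := hc.2
    have hsub : ({p, a, c} : Set ↥NStar) ⊆ f ⁻¹' {e₀} := by
      rintro x (rfl | rfl | rfl)
      · exact (by rw [mem_preimage, hp]; rfl)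
      · exact ha.1
      · exact hc.1
    have h3 : ({p, a, c} : Set ↥NStar).encard = 3 := by
      rw [Set.encard_insert_of_notMem (by
        rintro (rfl | rfl)
        · exact hap rfl
        · exact hcp rfl), Set.encard_pair hac]
      rfl
    have hle := (Set.encard_le_encard hsub).trans (hfib e₀)
    rw [h3] at hle
    norm_num at hle
  have hKc : IsClosed (range s) := (isCompact_range hsc).isClosed
  have hpK : p ∈ range s := ⟨e₀, rfl⟩
  -- A closed set `V₀` containing the possible extra fiber point, avoiding `range s`.
  obtain ⟨V, V₀, hVo, hV₀c, hVV₀, hTV, hV₀K⟩ :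
      ∃ V V₀ : Set ↥NStar, IsOpen V ∧ IsClosed V₀ ∧ V ⊆ V₀ ∧ T ⊆ V ∧
        Disjoint V₀ (range s) := by
    rcases T.eq_empty_or_nonempty with h | ⟨y, hy⟩
    · exact ⟨∅, ∅, isOpen_empty, isClosed_empty, Subset.rfl, by rw [h], by simp⟩
    · have hyK : y ∉ range s := by
        rintro ⟨e', he'⟩
        have h1 : e' = e₀ := by
          have := hy.1
          rw [mem_preimage, ← he', hsec e'] at this
          simpa using this
        exact hy.2 (by rw [← he', h1]; rfl)
      have hsep := NormalSpace.normal {y} (range s) isClosed_singleton hKc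
        (by simp [disjoint_left, hyK])
      obtain ⟨V, W, hVo, hWo, hyV, hKW, hVW⟩ := hsep
      refine ⟨V, closure V, hVo, isClosed_closure, subset_closure, ?_, ?_⟩
      · intro t ht
        rw [hTsub ht hy]
        exact hyV rfl
      · have h1 : V ⊆ Wᶜ := hVW.subset_compl_right
        have h2 : closure V ⊆ Wᶜ := closure_minimal h1 hWo.isClosed_compl
        exact disjoint_left.mpr fun x hx hxK => (h2 hx) (hKW hxK)
  have hpV₀ : p ∉ V₀ := fun h => disjoint_left.mp hV₀K h hpK
  set F : ℕ → Set ↥NStar := fun n => f ⁻¹' (Q n) \ V₀ with hF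
  have hFo : ∀ n, IsOpen (F n) := fun n => ((hQopen n).preimage hfc).sdiff hV₀c
  have hFne : ∀ n, (F n).Nonempty := by
    intro n
    obtain ⟨q, hq⟩ := hQne n
    refine ⟨s q, ?_, ?_⟩
    · rw [mem_preimage, hsec q]; exact hq
    · intro h
      exact disjoint_left.mp hV₀K h ⟨q, rfl⟩
  -- The sets `F n` form a π-base at `p`.
  have hpi : ∀ U : Set ↥NStar, IsOpen U → p ∈ U → ∃ n, F n ⊆ U := by
    intro U hU hpU
    set Gs : Set ↥NStar := (U ∩ V₀ᶜ) ∪ V with hGs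
    have hGso : IsOpen Gs := (hU.inter hV₀c.isOpen_compl).union hVo
    have hfib_sub : f ⁻¹' {e₀} ⊆ Gs := by
      intro x hx
      by_cases hxp : x = p
      · subst hxp; exact Or.inl ⟨hpU, hpV₀⟩
      · exact Or.inr (hTV ⟨hx, hxp⟩)
    have hclosed : IsClosed (f '' Gsᶜ) := hfc.isClosedMap _ hGso.isClosed_compl
    have he₀mem : e₀ ∈ (f '' Gsᶜ)ᶜ := by
      rintro ⟨x, hx, hfx⟩
      exact hx (hfib_sub (by rw [mem_preimage, hfx]; rfl))
    obtain ⟨n, hn⟩ := hQpi _ hclosed.isOpen_compl ⟨e₀, he₀mem⟩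
    refine ⟨n, fun x hx => ?_⟩
    have hxG : x ∈ Gs := by
      by_contra hxG
      exact (hn hx.1) (mem_image_of_mem f hxG)
    rcases hxG with h | h
    · exact h.1
    · exact absurd (hVV₀ h) hx.2
  -- Transfer each `F n` to a closed set of the form `closure (stoneCechUnit '' A n)`.
  have hrel : ∀ n, ∃ Gt : Set (StoneCech ℕ), IsOpen Gt ∧ Subtype.val ⁻¹' Gt = F n :=
    fun n => isOpen_induced_iff.mp (hFo n)
  choose Gt hGto hGtF using hrel
  choose xF hxF using hFne
  have hx_mem : ∀ n, (xF n : StoneCech ℕ) ∈ Gt n := by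
    intro n
    have h1 := hxF n
    rw [← hGtF n] at h1
    exact h1
  choose A hA1 hA2 using fun n => Stmt14B.exists_closure_subset (hGto n) (hx_mem n)
  have hAinf : ∀ n, (A n).Infinite := fun n =>
    Stmt14B.infinite_of_NStar_mem_closure (xF n).2 (hA1 n)
  obtain ⟨Y, hY⟩ := Stmt14C.exists_splitting A hAinf
  have htrace : ∀ n (x : ↥NStar),
      (x : StoneCech ℕ) ∈ closure (stoneCechUnit '' (A n)) → x ∈ F n := by
    intro n x hx
    rw [← hGtF n]
    exact hA2 n hx
  have hcont : Continuous (fun x : ↥NStar => Stmt14.eb Y (x : StoneCech ℕ)) :=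
    (Stmt14.continuous_eb Y).comp continuous_subtype_val
  -- Final diagonalization.
  have key : ∀ (t : Bool) (B : ℕ → Set ℕ), (∀ n, B n ⊆ A n) → (∀ n, (B n).Infinite) →
      (∀ n m, m ∈ B n → Stmt14.eb Y (stoneCechUnit m) = !t) →
      Stmt14.eb Y (p : StoneCech ℕ) = t → False := by
    intro t B hBsub hBinf hBval hpt
    have hUo : IsOpen {x : ↥NStar | Stmt14.eb Y ↑x = t} := by
      have heq : {x : ↥NStar | Stmt14.eb Y ↑x = t}
          = (fun x : ↥NStar => Stmt14.eb Y ↑x) ⁻¹' {t} := rfl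
      rw [heq]
      exact (isOpen_discrete _).preimage hcont
    obtain ⟨n, hn⟩ := hpi _ hUo hpt
    obtain ⟨q, hqN, hqcl⟩ := Stmt14B.exists_NStar_mem_closure (hBinf n)
    have hq1 : (⟨q, hqN⟩ : ↥NStar) ∈ F n :=
      htrace n _ (closure_mono (image_mono (hBsub n)) hqcl)
    have hq2 : Stmt14.eb Y q = t := hn hq1
    have hq3 : q ∈ {x : StoneCech ℕ | Stmt14.eb Y x = !t} := by
      have hcl : IsClosed {x : StoneCech ℕ | Stmt14.eb Y x = !t} := by
        have heq : {x : StoneCech ℕ | Stmt14.eb Y x = !t} = Stmt14.eb Y ⁻¹' {!t} := rfl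
        rw [heq]
        exact (isClosed_discrete _).preimage (Stmt14.continuous_eb Y)
      apply closure_minimal _ hcl hqcl
      rintro z ⟨m, hm, rfl⟩
      exact hBval n m hm
    have hq4 : Stmt14.eb Y q = !t := hq3
    rw [hq2] at hq4
    cases t <;> simp at hq4
  cases hbool : Stmt14.eb Y (p : StoneCech ℕ) with
  | true =>
    exact key true (fun n => A n \ Y) (fun n => diff_subset) (fun n => (hY n).2)
      (fun n m hm => Stmt14.eb_unit_not_mem hm.2) hbool
  | false =>
    exact key false (fun n => A n ∩ Y) (fun n => inter_subset_left) (fun n => (hY n).1)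
      (fun n m hm => Stmt14.eb_unit_mem hm.2) hbool
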